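/- Let g^{ij}(u) be a smooth nondegenerate contravariant metric of zero curvature with Levi-Civita Christoffel symbols Γ^i_{jk}, and set Γ^{ij}_k := −g^{is}Γ^j_{sk}. Then for reduced 1-forms α = (α_i), β = (β_j) ∈ 𝒜ⁿ, the bracket {α,β} := Lie_{Pβ}α − Lie_{Pα}β + δ⟨β, Pα⟩ is, as a 1-form on the formal loop space, the reduced 1-form with components {α,β}_i = Σ_{k,l,s} ∂_x^s( g^{kl}∂_xβ_l + Γ^{kl}_m u^m_x β_l )(∂α_i/∂u^k_{(s)}) − Σ_{k,l,s} ∂_x^s( g^{kl}∂_xα_l + Γ^{kl}_m u^m_x α_l )(∂β_i/∂u^k_{(s)}) + Σ_{k,l} ( α_k ∂_x β_l − β_k ∂_x α_l ) Γ^{lk}_i − Σ_{k,l,s,m} α_k β_l [ Γ^k_{is} Γ^{sl}_m − Γ^l_{is} Γ^{sk}_m ] u^m_x. -/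

import Mathlib

open Finset

/-- An abstract model of the ring `𝒜` of differential polynomials in the formal
variables `u^i_{(s)}` (`i = 1,…,n`, `s ≥ 0`, `u^i_{(0)} = u^i`): a commutative
`ℝ`-algebra `A` equipped with the variables `u (i,s)`, the partial derivatives
`pd (i,s) = ∂/∂u^i_{(s)}` (commuting `ℝ`-linear derivations with
`∂u^j_{(t)}/∂u^i_{(s)} = δ`), a finiteness witness `supp f` (each `f` depends on
finitely many of the variables), and the total `x`-derivative
`∂_x f = Σ_{i,s} u^i_{(s+1)} ∂f/∂u^i_{(s)}` (a finite sum on each `f`). -/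
structure DiffPolyAlg (n : ℕ) (A : Type*) [CommRing A] [Algebra ℝ A] where
  u : Fin n × ℕ → A
  pd : Fin n × ℕ → A → A
  pd_add : ∀ v f g, pd v (f + g) = pd v f + pd v g
  pd_smul : ∀ v (r : ℝ) f, pd v (r • f) = r • pd v f
  pd_mul : ∀ v f g, pd v (f * g) = pd v f * g + f * pd v g
  pd_u : ∀ v w, pd v (u w) = if v = w then 1 else 0
  pd_comm : ∀ v w f, pd v (pd w f) = pd w (pd v f)
  supp : A → Finset (Fin n × ℕ)
  pd_eq_zero : ∀ f v, v ∉ supp f → pd v f = 0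
  Dx : A → A
  Dx_add : ∀ f g, Dx (f + g) = Dx f + Dx g
  Dx_smul : ∀ (r : ℝ) f, Dx (r • f) = r • Dx f
  Dx_mul : ∀ f g, Dx (f * g) = Dx f * g + f * Dx g
  Dx_spec : ∀ f, ∀ S : Finset (Fin n × ℕ), supp f ⊆ S →
      Dx f = ∑ v ∈ S, u (v.1, v.2 + 1) * pd v f

namespace DiffPolyAlg

variable {n : ℕ} {A : Type*} [CommRing A] [Algebra ℝ A]

/-- The finite set of orders `s` such that `∂f/∂u^i_{(s)}` can be nonzero;
sums `Σ_s` below are taken over this set. -/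
def sset (D : DiffPolyAlg n A) (f : A) (i : Fin n) : Finset ℕ :=
  ((D.supp f).filter fun v => v.1 = i).image Prod.snd

/-- The components `{α,β}_i = Σ_{k,l,s} η^{kl} [ (∂_x^{s+1}β_l)(∂α_i/∂u^k_{(s)})
− (∂_x^{s+1}α_l)(∂β_i/∂u^k_{(s)}) ]` of the Poisson bracket of two reduced
1-forms in flat coordinates (the sum over the pairs `(k,s)` is restricted to the
finite set where the partial derivatives can be nonzero). -/
def pbracket (D : DiffPolyAlg n A) (η : Fin n → Fin n → ℝ)
    (α β : Fin n → A) : Fin n → A := fun i =>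
  (∑ v ∈ D.supp (α i), ∑ l, η v.1 l • (D.Dx^[v.2 + 1] (β l) * D.pd v (α i)))
    - ∑ v ∈ D.supp (β i), ∑ l, η v.1 l • (D.Dx^[v.2 + 1] (α l) * D.pd v (β i))

end DiffPolyAlg

namespace DiffPolyAlg

variable {n : ℕ} {A : Type*} [CommRing A] [Algebra ℝ A]

/-- The contravariant Christoffel symbols `Γ^{ij}_k := −g^{is} Γ^j_{sk}`. -/
def contraGamma (g : Fin n → Fin n → A) (Γ : Fin n → Fin n → Fin n → A) :
    Fin n → Fin n → Fin n → A := fun i j k => -(∑ s, g i s * Γ j s k)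

/-- The hydrodynamic Poisson structure applied to a reduced 1-form:
`(Pβ)^i = g^{il} ∂_x β_l + Γ^{il}_k u^k_x β_l`. -/
def hydroP (D : DiffPolyAlg n A) (g : Fin n → Fin n → A)
    (Γ : Fin n → Fin n → Fin n → A) (β : Fin n → A) : Fin n → A := fun i =>
  (∑ l, g i l * D.Dx (β l))
    + ∑ l, ∑ k, contraGamma g Γ i l k * (D.u (k, 1) * β l)

/-- The coefficient of `δu^i_{(t)}` in the (non-reduced) 1-form
`Lie_{Pβ}α − Lie_{Pα}β + δ⟨β, Pα⟩` for the hydrodynamic Poisson structure. -/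
def rawBracketCompG (D : DiffPolyAlg n A) (g : Fin n → Fin n → A)
    (Γ : Fin n → Fin n → Fin n → A) (α β : Fin n → A) : Fin n → ℕ → A :=
  fun i t =>
    (if t = 0 then
        (∑ v ∈ D.supp (α i), D.Dx^[v.2] (hydroP D g Γ β v.1) * D.pd v (α i))
          - ∑ v ∈ D.supp (β i), D.Dx^[v.2] (hydroP D g Γ α v.1) * D.pd v (β i)
      else 0)
      + (∑ k, α k * D.pd (i, t) (hydroP D g Γ β k))
      - (∑ k, β k * D.pd (i, t) (hydroP D g Γ α k))
      + D.pd (i, t) (∑ l, β l * hydroP D g Γ α l)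

/-- A finite set of orders `t` containing all those for which the coefficient of
`δu^i_{(t)}` in `Lie_{Pβ}α − Lie_{Pα}β + δ⟨β, Pα⟩` can be nonzero. -/
def rawBracketOrdersG (D : DiffPolyAlg n A) (g : Fin n → Fin n → A)
    (Γ : Fin n → Fin n → Fin n → A) (α β : Fin n → A) (i : Fin n) : Finset ℕ :=
  insert 0
    ((Finset.univ.biUnion fun k =>
        D.sset (hydroP D g Γ β k) i ∪ D.sset (hydroP D g Γ α k) i)
      ∪ D.sset (∑ l, β l * hydroP D g Γ α l) i)

/-- The reduced components `R_i = Σ_t (−1)^t ∂_x^t (coefficient of δu^i_{(t)})`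
of the 1-form `{α,β} = Lie_{Pβ}α − Lie_{Pα}β + δ⟨β, Pα⟩`; two 1-forms are equal
modulo the image of `d` precisely when their reduced components coincide. -/
def reducedRawBracketG (D : DiffPolyAlg n A) (g : Fin n → Fin n → A)
    (Γ : Fin n → Fin n → Fin n → A) (α β : Fin n → A) : Fin n → A := fun i =>
  ∑ t ∈ rawBracketOrdersG D g Γ α β i,
    ((-1 : ℝ) ^ t) • D.Dx^[t] (rawBracketCompG D g Γ α β i t)

end DiffPolyAlg

namespace DiffPolyAlg

variable {n : ℕ} {A : Type*} [CommRing A] [Algebra ℝ A] (D : DiffPolyAlg n A)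

lemma pd_zero (v : Fin n × ℕ) : D.pd v 0 = 0 := by
  have h := D.pd_add v 0 0
  simpa using h.symm

lemma pd_one (v : Fin n × ℕ) : D.pd v 1 = 0 := by
  have h := D.pd_mul v 1 1
  simpa using h

lemma pd_neg (v : Fin n × ℕ) (f : A) : D.pd v (-f) = -D.pd v f := by
  have h := D.pd_add v f (-f)
  simp [D.pd_zero] at h
  exact eq_neg_of_add_eq_zero_right h.symm

lemma pd_sub (v : Fin n × ℕ) (f g : A) : D.pd v (f - g) = D.pd v f - D.pd v g := by
  rw [sub_eq_add_neg, D.pd_add, D.pd_neg, sub_eq_add_neg]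

lemma pd_sum {ι : Type*} (v : Fin n × ℕ) (s : Finset ι) (f : ι → A) :
    D.pd v (∑ x ∈ s, f x) = ∑ x ∈ s, D.pd v (f x) := by
  classical
  induction s using Finset.induction_on with
  | empty => simp [D.pd_zero]
  | insert a s' h ih => simp [Finset.sum_insert h, D.pd_add, ih]

lemma Dx_zero : D.Dx 0 = 0 := by
  have h := D.Dx_add 0 0
  simpa using h.symm

lemma Dx_neg (f : A) : D.Dx (-f) = -D.Dx f := by
  have h := D.Dx_add f (-f)
  simp [D.Dx_zero] at h
  exact eq_neg_of_add_eq_zero_right h.symm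

lemma Dx_sub (f g : A) : D.Dx (f - g) = D.Dx f - D.Dx g := by
  rw [sub_eq_add_neg, D.Dx_add, D.Dx_neg, sub_eq_add_neg]

lemma Dx_sum {ι : Type*} (s : Finset ι) (f : ι → A) :
    D.Dx (∑ x ∈ s, f x) = ∑ x ∈ s, D.Dx (f x) := by
  classical
  induction s using Finset.induction_on with
  | empty => simp [D.Dx_zero]
  | insert a s' h ih => simp [Finset.sum_insert h, D.Dx_add, ih]

lemma DxIter_zero (t : ℕ) : D.Dx^[t] 0 = 0 := by
  induction t with
  | zero => rfl
  | succ t ih => rw [Function.iterate_succ_apply, D.Dx_zero, ih]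

lemma DxIter_add (t : ℕ) (f g : A) : D.Dx^[t] (f + g) = D.Dx^[t] f + D.Dx^[t] g := by
  induction t generalizing f g with
  | zero => rfl
  | succ t ih =>
      simp only [Function.iterate_succ_apply, D.Dx_add, ih]

lemma DxIter_neg (t : ℕ) (f : A) : D.Dx^[t] (-f) = -D.Dx^[t] f := by
  induction t generalizing f with
  | zero => rfl
  | succ t ih =>
      simp only [Function.iterate_succ_apply, D.Dx_neg, ih]

lemma DxIter_sub (t : ℕ) (f g : A) : D.Dx^[t] (f - g) = D.Dx^[t] f - D.Dx^[t] g := by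
  rw [sub_eq_add_neg, D.DxIter_add, D.DxIter_neg, sub_eq_add_neg]

lemma DxIter_smul (t : ℕ) (r : ℝ) (f : A) : D.Dx^[t] (r • f) = r • D.Dx^[t] f := by
  induction t generalizing f with
  | zero => rfl
  | succ t ih =>
      simp only [Function.iterate_succ_apply, D.Dx_smul, ih]

lemma DxIter_sum {ι : Type*} (t : ℕ) (s : Finset ι) (f : ι → A) :
    D.Dx^[t] (∑ x ∈ s, f x) = ∑ x ∈ s, D.Dx^[t] (f x) := by
  classical
  induction s using Finset.induction_on with
  | empty => simp [D.DxIter_zero]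
  | insert a s' h ih => simp [Finset.sum_insert h, D.DxIter_add, ih]

end DiffPolyAlg

namespace DiffPolyAlg

variable {n : ℕ} {A : Type*} [CommRing A] [Algebra ℝ A] (D : DiffPolyAlg n A)

lemma pd_Dx (i : Fin n) (t : ℕ) (f : A) :
    D.pd (i, t) (D.Dx f) =
      D.Dx (D.pd (i, t) f) + (if h : t = 0 then 0 else D.pd (i, t - 1) f) := by
  classical
  set S : Finset (Fin n × ℕ) :=
    D.supp f ∪ D.supp (D.pd (i, t) f) ∪ {(i, t - 1)} with hS
  have hsub : D.supp f ⊆ S := by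
    intro v hv; simp [hS, hv]
  have hsub2 : D.supp (D.pd (i, t) f) ⊆ S := by
    intro v hv; simp [hS, hv]
  rw [D.Dx_spec f S hsub, D.pd_sum]
  have hterm : ∀ v ∈ S,
      D.pd (i, t) (D.u (v.1, v.2 + 1) * D.pd v f) =
        (if (i, t) = (v.1, v.2 + 1) then 1 else 0) * D.pd v f
          + D.u (v.1, v.2 + 1) * D.pd v (D.pd (i, t) f) := by
    intro v _
    rw [D.pd_mul, D.pd_u, D.pd_comm]
  rw [Finset.sum_congr rfl hterm, Finset.sum_add_distrib]
  have h2 : ∑ v ∈ S, D.u (v.1, v.2 + 1) * D.pd v (D.pd (i, t) f)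
      = D.Dx (D.pd (i, t) f) := (D.Dx_spec _ S hsub2).symm
  rw [h2, add_comm]
  congr 1
  by_cases ht : t = 0
  · subst ht
    rw [dif_pos rfl]
    apply Finset.sum_eq_zero
    intro v _
    have : ¬ ((i, (0:ℕ)) = (v.1, v.2 + 1)) := by
      intro h; exact Nat.succ_ne_zero v.2 (Prod.ext_iff.mp h).2.symm
    rw [if_neg this, zero_mul]
  · rw [dif_neg ht]
    obtain ⟨s, hs⟩ := Nat.exists_eq_succ_of_ne_zero ht
    subst hs
    simp only [Nat.succ_sub_one]
    have : ∀ v : Fin n × ℕ, ((i, s + 1) = (v.1, v.2 + 1)) ↔ v = (i, s) := by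
      intro v
      constructor
      · intro h
        have h1 := (Prod.ext_iff.mp h).1
        have h2 := (Prod.ext_iff.mp h).2
        exact Prod.ext h1.symm (Nat.succ_injective h2.symm)
      · rintro rfl; rfl
    rw [Finset.sum_congr rfl (fun v _ => by rw [if_congr (this v) rfl rfl])]
    simp only [ite_mul, one_mul, zero_mul]
    rw [Finset.sum_ite_eq' S ((i, s) : Fin n × ℕ) (fun v => D.pd v f),
      if_pos (by simp [hS])]

end DiffPolyAlg

namespace DiffPolyAlg

variable {n : ℕ} {A : Type*} [CommRing A] [Algebra ℝ A] (D : DiffPolyAlg n A)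

lemma pd_Dx_zero (i : Fin n) (f : A) :
    D.pd (i, 0) (D.Dx f) = D.Dx (D.pd (i, 0) f) := by
  have h := D.pd_Dx i 0 f
  simpa using h

lemma pd_Dx_succ (i : Fin n) (t : ℕ) (f : A) :
    D.pd (i, t + 1) (D.Dx f) = D.Dx (D.pd (i, t + 1) f) + D.pd (i, t) f := by
  have h := D.pd_Dx i (t + 1) f
  simpa using h

/-- `f` depends on `u^i_{(t)}` only for `t < N`. -/
def Bdd (f : A) (i : Fin n) (N : ℕ) : Prop := ∀ t, N ≤ t → D.pd (i, t) f = 0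

lemma bdd_default (f : A) (i : Fin n) :
    D.Bdd f i ((D.supp f).sup Prod.snd + 1) := by
  intro t ht
  apply D.pd_eq_zero
  intro hmem
  have := Finset.le_sup (f := Prod.snd) hmem
  simp at this
  omega

lemma Bdd.mono {f : A} {i : Fin n} {N M : ℕ} (h : D.Bdd f i N) (hNM : N ≤ M) :
    D.Bdd f i M := fun t ht => h t (le_trans hNM ht)

lemma pd_eq_zero_of_not_sset (f : A) (i : Fin n) (t : ℕ) (h : t ∉ D.sset f i) :
    D.pd (i, t) f = 0 := by
  apply D.pd_eq_zero
  intro hmem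
  exact h (Finset.mem_image.mpr ⟨(i, t), Finset.mem_filter.mpr ⟨hmem, rfl⟩, rfl⟩)

/-- `Σ_{t<N} (−1)^t ∂_x^t ( w · ∂f/∂u^i_{(t)} )`: the adjoint Fréchet derivative
pairing used to reduce 1-forms. -/
def Efun (i : Fin n) (w f : A) (N : ℕ) : A :=
  ∑ t ∈ Finset.range N, ((-1 : ℝ) ^ t) • D.Dx^[t] (w * D.pd (i, t) f)

lemma Efun_congr {f : A} {i : Fin n} {N M : ℕ} (h : D.Bdd f i N) (hNM : N ≤ M)
    (w : A) : D.Efun i w f M = D.Efun i w f N := by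
  unfold Efun
  rw [← Finset.sum_subset (Finset.range_subset_range.mpr hNM)]
  intro t ht hnt
  simp only [Finset.mem_range] at hnt
  rw [h t (by omega), mul_zero, D.DxIter_zero, smul_zero]

lemma Efun_add_f (i : Fin n) (w f g : A) (N : ℕ) :
    D.Efun i w (f + g) N = D.Efun i w f N + D.Efun i w g N := by
  unfold Efun
  rw [← Finset.sum_add_distrib]
  exact Finset.sum_congr rfl fun t _ => by
    rw [D.pd_add, mul_add, D.DxIter_add, smul_add]

lemma Efun_add_w (i : Fin n) (w w' f : A) (N : ℕ) :
    D.Efun i (w + w') f N = D.Efun i w f N + D.Efun i w' f N := by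
  unfold Efun
  rw [← Finset.sum_add_distrib]
  exact Finset.sum_congr rfl fun t _ => by
    rw [add_mul, D.DxIter_add, smul_add]

lemma Efun_zero_w (i : Fin n) (f : A) (N : ℕ) : D.Efun i 0 f N = 0 := by
  unfold Efun
  exact Finset.sum_eq_zero fun t _ => by rw [zero_mul, D.DxIter_zero, smul_zero]

lemma Efun_zero_f (i : Fin n) (w : A) (N : ℕ) : D.Efun i w 0 N = 0 := by
  unfold Efun
  exact Finset.sum_eq_zero fun t _ => by
    rw [D.pd_zero, mul_zero, D.DxIter_zero, smul_zero]

lemma Efun_sum_w {ι : Type*} (i : Fin n) (s : Finset ι) (w : ι → A) (f : A) (N : ℕ) :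
    D.Efun i (∑ x ∈ s, w x) f N = ∑ x ∈ s, D.Efun i (w x) f N := by
  classical
  induction s using Finset.induction_on with
  | empty => simp [D.Efun_zero_w]
  | insert a s' h ih =>
      rw [Finset.sum_insert h, Finset.sum_insert h, D.Efun_add_w, ih]

lemma Efun_sum_f {ι : Type*} (i : Fin n) (s : Finset ι) (w : A) (f : ι → A) (N : ℕ) :
    D.Efun i w (∑ x ∈ s, f x) N = ∑ x ∈ s, D.Efun i w (f x) N := by
  classical
  induction s using Finset.induction_on with
  | empty => simp [D.Efun_zero_f]
  | insert a s' h ih =>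
      rw [Finset.sum_insert h, Finset.sum_insert h, D.Efun_add_f, ih]

lemma Efun_mul (i : Fin n) (w f g : A) (N : ℕ) :
    D.Efun i w (f * g) N = D.Efun i (w * g) f N + D.Efun i (w * f) g N := by
  unfold Efun
  rw [← Finset.sum_add_distrib]
  exact Finset.sum_congr rfl fun t _ => by
    rw [D.pd_mul, ← smul_add, ← D.DxIter_add]
    ring_nf

lemma Efun_order0 (i : Fin n) (w f : A) (N : ℕ)
    (hf : ∀ v : Fin n × ℕ, 1 ≤ v.2 → D.pd v f = 0) (hN : 1 ≤ N) :
    D.Efun i w f N = w * D.pd (i, 0) f := by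
  unfold Efun
  rw [Finset.sum_eq_single 0]
  · simp
  · intro t _ ht
    rw [hf (i, t) (by omega), mul_zero, D.DxIter_zero, smul_zero]
  · intro h
    exact absurd (Finset.mem_range.mpr (by omega)) h

lemma Efun_u1 (i m : Fin n) (w : A) (N : ℕ) (hN : 2 ≤ N) :
    D.Efun i w (D.u (m, 1)) N = if m = i then -D.Dx w else 0 := by
  unfold Efun
  rw [Finset.sum_eq_single 1]
  · simp only [pow_one, Function.iterate_one, D.pd_u]
    by_cases h : m = i
    · subst h
      rw [if_pos rfl, if_pos rfl, mul_one]
      simp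
    · rw [if_neg h, if_neg (by simp [Prod.ext_iff]; tauto), mul_zero, D.Dx_zero,
        smul_zero]
  · intro t _ ht
    rw [D.pd_u, if_neg (by simp [Prod.ext_iff]; omega), mul_zero, D.DxIter_zero,
      smul_zero]
  · intro h
    exact absurd (Finset.mem_range.mpr (by omega)) h

end DiffPolyAlg

namespace DiffPolyAlg

variable {n : ℕ} {A : Type*} [CommRing A] [Algebra ℝ A] (D : DiffPolyAlg n A)

lemma Efun_adjoint {f : A} {i : Fin n} {N : ℕ} (h : D.Bdd f i N) (w : A) :
    D.Efun i w (D.Dx f) (N + 1) = -D.Efun i (D.Dx w) f (N + 1) := by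
  rw [eq_neg_iff_add_eq_zero]
  set G : ℕ → A := fun t => ((-1 : ℝ) ^ t) • D.Dx^[t + 1] (w * D.pd (i, t) f)
    with hG
  have key : ∀ t ∈ Finset.range (N + 1),
      ((-1 : ℝ) ^ t) • D.Dx^[t] (w * D.pd (i, t) (D.Dx f))
        + ((-1 : ℝ) ^ t) • D.Dx^[t] (D.Dx w * D.pd (i, t) f)
      = (if t = 0 then G 0 else G t - G (t - 1)) := by
    intro t _
    match t with
    | 0 =>
        simp only [if_pos rfl, hG, pow_zero, one_smul, Function.iterate_zero,
          id_eq, Function.iterate_one, D.pd_Dx_zero]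
        rw [if_pos trivial]
        show _ = D.Dx^[1] _
        rw [Function.iterate_one, D.Dx_mul]
        ring
    | (s + 1) =>
        rw [if_neg (Nat.succ_ne_zero s)]
        simp only [Nat.add_sub_cancel, hG]
        rw [D.pd_Dx_succ, mul_add, D.DxIter_add, smul_add]
        have h1 : D.Dx^[s + 1] (w * D.Dx (D.pd (i, s + 1) f))
              + D.Dx^[s + 1] (D.Dx w * D.pd (i, s + 1) f)
            = D.Dx^[s + 1 + 1] (w * D.pd (i, s + 1) f) := by
          have hinner : w * D.Dx (D.pd (i, s + 1) f)
                + D.Dx w * D.pd (i, s + 1) f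
              = D.Dx (w * D.pd (i, s + 1) f) := by
            rw [D.Dx_mul]; ring
          rw [← D.DxIter_add, hinner, ← Function.iterate_succ_apply]
        have h2 : ((-1 : ℝ) ^ (s + 1)) • D.Dx^[s + 1] (w * D.pd (i, s) f)
            = -(((-1 : ℝ) ^ s) • D.Dx^[s + 1] (w * D.pd (i, s) f)) := by
          rw [pow_succ, ← neg_smul]; ring_nf
        calc ((-1 : ℝ) ^ (s + 1)) • D.Dx^[s + 1] (w * D.Dx (D.pd (i, s + 1) f))
              + ((-1 : ℝ) ^ (s + 1)) • D.Dx^[s + 1] (w * D.pd (i, s) f)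
              + ((-1 : ℝ) ^ (s + 1)) • D.Dx^[s + 1] (D.Dx w * D.pd (i, s + 1) f)
            = ((-1 : ℝ) ^ (s + 1)) • (D.Dx^[s + 1] (w * D.Dx (D.pd (i, s + 1) f))
                + D.Dx^[s + 1] (D.Dx w * D.pd (i, s + 1) f))
                + ((-1 : ℝ) ^ (s + 1)) • D.Dx^[s + 1] (w * D.pd (i, s) f) := by
              rw [smul_add]; ring_nf
          _ = ((-1 : ℝ) ^ (s + 1)) • D.Dx^[s + 1 + 1] (w * D.pd (i, s + 1) f)
                - ((-1 : ℝ) ^ s) • D.Dx^[s + 1] (w * D.pd (i, s) f) := by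
              rw [h1, h2]; ring_nf
  unfold Efun
  rw [← Finset.sum_add_distrib, Finset.sum_congr rfl key]
  rw [Finset.sum_range_succ']
  simp only [if_neg (Nat.succ_ne_zero _), if_pos rfl, Nat.add_sub_cancel]
  rw [Finset.sum_range_sub G]
  have : D.pd (i, N) f = 0 := h N le_rfl
  simp [hG, this, D.DxIter_zero, D.Dx_zero]

lemma Dx_order0 (f : A) (hf : ∀ v : Fin n × ℕ, 1 ≤ v.2 → D.pd v f = 0) :
    D.Dx f = ∑ m, D.u (m, 1) * D.pd (m, 0) f := by
  classical
  set S : Finset (Fin n × ℕ) := D.supp f ∪ Finset.univ ×ˢ {0} with hS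
  rw [D.Dx_spec f S (by intro v hv; simp [hS, hv])]
  rw [← Finset.sum_subset (s₁ := Finset.univ ×ˢ {(0 : ℕ)})
    (by intro v hv; simp [hS]; simp at hv; tauto)]
  · rw [Finset.sum_product]
    simp
  · intro v hv hnv
    have : 1 ≤ v.2 := by
      have hv2 : v.2 ≠ 0 := by
        intro h0
        exact hnv (by
          simp only [Finset.mem_product, Finset.mem_univ, Finset.mem_singleton,
            true_and, h0])
      omega
    rw [hf v this, mul_zero]

end DiffPolyAlg

namespace DiffPolyAlg

variable {n : ℕ} {A : Type*} [CommRing A] [Algebra ℝ A] (D : DiffPolyAlg n A)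

lemma sum_swap_mul (w : Fin n → A) (M : Fin n → Fin n → A) (c : Fin n → A) :
    ∑ a, w a * ∑ s, M a s * c s = ∑ s, (∑ a, w a * M a s) * c s := by
  simp only [Finset.mul_sum, Finset.sum_mul, mul_assoc]
  exact Finset.sum_comm

lemma contract_left (gl g : Fin n → Fin n → A)
    (hlg : ∀ i j, ∑ s, gl i s * g s j = if i = j then 1 else 0)
    (c : Fin n → A) (i : Fin n) :
    ∑ a, gl i a * ∑ s, g a s * c s = c i := by
  rw [sum_swap_mul]
  rw [Finset.sum_congr rfl fun s (_ : s ∈ Finset.univ) => by rw [hlg i s]]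
  simp

lemma inv_comm (g gl : Fin n → Fin n → A)
    (hg_inv : ∀ i j, ∑ s, g i s * gl s j = if i = j then 1 else 0) :
    ∀ i j, ∑ s, gl i s * g s j = if i = j then 1 else 0 := by
  classical
  set G : Matrix (Fin n) (Fin n) A := Matrix.of (fun i j => g i j) with hGdef
  set L : Matrix (Fin n) (Fin n) A := Matrix.of (fun i j => gl i j) with hLdef
  have hGL : G * L = 1 := by
    ext i j
    rw [Matrix.mul_apply, Matrix.one_apply]
    exact hg_inv i j
  have hLG : L * G = 1 := mul_eq_one_comm.mp hGL
  intro i j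
  have := congrFun (congrFun hLG i) j
  rw [Matrix.mul_apply, Matrix.one_apply] at this
  exact this

lemma key_metric (g gl : Fin n → Fin n → A) (Γ : Fin n → Fin n → Fin n → A)
    (hg_symm : ∀ i j, g i j = g j i)
    (hg_inv : ∀ i j, ∑ s, g i s * gl s j = if i = j then 1 else 0)
    (hΓ_metric : ∀ k i j, D.pd (k, 0) (gl i j) =
      ∑ l, (gl l j * Γ l i k + gl i l * Γ l j k))
    (k : Fin n) : ∀ i m, D.pd (k, 0) (g i m) =
      contraGamma g Γ i m k + contraGamma g Γ m i k := by
  classical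
  set G : Matrix (Fin n) (Fin n) A := Matrix.of (fun i j => g i j) with hGdef
  set L : Matrix (Fin n) (Fin n) A := Matrix.of (fun i j => gl i j) with hLdef
  set P : Matrix (Fin n) (Fin n) A :=
    Matrix.of (fun i j => D.pd (k, 0) (g i j)) with hPdef
  set Q : Matrix (Fin n) (Fin n) A :=
    Matrix.of (fun i j => D.pd (k, 0) (gl i j)) with hQdef
  set Gm : Matrix (Fin n) (Fin n) A := Matrix.of (fun i j => Γ i j k) with hGmdef
  set Gmt : Matrix (Fin n) (Fin n) A := Matrix.of (fun i j => Γ j i k) with hGmtdef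
  have hGL : G * L = 1 := by
    ext i j; rw [Matrix.mul_apply, Matrix.one_apply]; exact hg_inv i j
  have hLG : L * G = 1 := mul_eq_one_comm.mp hGL
  have hPL : P * L + G * Q = 0 := by
    ext i j
    simp only [Matrix.add_apply, Matrix.mul_apply, Matrix.zero_apply]
    have h2 : ∑ s, D.pd (k, 0) (g i s * gl s j) = 0 := by
      rw [← D.pd_sum, hg_inv i j]
      split <;> simp [D.pd_one, D.pd_zero]
    rw [← h2, Finset.sum_congr rfl fun s _ => D.pd_mul (k, 0) (g i s) (gl s j)]
    rw [Finset.sum_add_distrib]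
    rfl
  have hQ : Q = Gmt * L + L * Gm := by
    ext s j
    simp only [Matrix.add_apply, Matrix.mul_apply]
    show D.pd (k, 0) (gl s j) = (∑ l, Γ l s k * gl l j) + ∑ l, gl s l * Γ l j k
    rw [hΓ_metric k s j, Finset.sum_add_distrib]
    exact congrArg₂ (· + ·)
      (Finset.sum_congr rfl fun l _ => mul_comm _ _) rfl
  have hP : P = -(G * Gmt) - Gm * G := by
    have h1 : P * L = -(G * Q) := eq_neg_of_add_eq_zero_left hPL
    calc P = P * (L * G) := by rw [hLG, mul_one]
      _ = (P * L) * G := by rw [mul_assoc]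
      _ = -(G * Q) * G := by rw [h1]
      _ = -(G * (Gmt * L + L * Gm) * G) := by rw [hQ, neg_mul]
      _ = -((G * Gmt) * (L * G)) - (G * L) * (Gm * G) := by noncomm_ring
      _ = -(G * Gmt) - Gm * G := by rw [hLG, hGL, mul_one, one_mul]
  intro i m
  have := congrFun (congrFun hP i) m
  simp only [Matrix.sub_apply, Matrix.neg_apply, Matrix.mul_apply] at this
  rw [show P i m = D.pd (k, 0) (g i m) from rfl] at this
  rw [this]
  unfold contraGamma
  have e1 : (∑ j, G i j * Gmt j m) = ∑ s, g i s * Γ m s k := rfl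
  have e2 : (∑ j, Gm i j * G j m) = ∑ s, g m s * Γ i s k := by
    exact Finset.sum_congr rfl fun s _ => by
      show Γ i s k * g s m = g m s * Γ i s k
      rw [hg_symm m s, mul_comm]
  rw [e1, e2]
  ring

lemma key_curv (g gl : Fin n → Fin n → A) (Γ : Fin n → Fin n → Fin n → A)
    (hlg : ∀ i j, ∑ s, gl i s * g s j = if i = j then 1 else 0)
    (hflat : ∀ i j k l,
      (∑ s, g i s * (D.pd (s, 0) (contraGamma g Γ j k l)
          - D.pd (l, 0) (contraGamma g Γ j k s)))
        - (∑ s, contraGamma g Γ i j s * contraGamma g Γ s k l)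
        + (∑ s, contraGamma g Γ i k s * contraGamma g Γ s j l) = 0)
    (i k l m : Fin n) :
    D.pd (i, 0) (contraGamma g Γ k l m) - D.pd (m, 0) (contraGamma g Γ k l i)
      = -∑ s, (Γ k i s * contraGamma g Γ s l m
          - Γ l i s * contraGamma g Γ s k m) := by
  classical
  set X : Fin n → A := fun s =>
    D.pd (s, 0) (contraGamma g Γ k l m) - D.pd (m, 0) (contraGamma g Γ k l s)
    with hX
  have hcontr : ∀ (j : Fin n) (s : Fin n),
      ∑ a, gl i a * contraGamma g Γ a j s = -Γ j i s := by
    intro j s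
    have : ∀ a, gl i a * contraGamma g Γ a j s
        = -(gl i a * ∑ b, g a b * Γ j b s) := by
      intro a
      unfold contraGamma
      rw [mul_neg]
    rw [Finset.sum_congr rfl (fun a _ => this a), Finset.sum_neg_distrib,
      contract_left gl g hlg (fun b => Γ j b s) i]
  have hXi : X i = ∑ a, gl i a * ∑ s, g a s * X s :=
    (contract_left gl g hlg X i).symm
  have hBC : ∀ a, ∑ s, g a s * X s
      = (∑ s, contraGamma g Γ a k s * contraGamma g Γ s l m)
        - ∑ s, contraGamma g Γ a l s * contraGamma g Γ s k m := by
    intro a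
    have h := hflat a k l m
    linear_combination h
  show X i = _
  rw [hXi, Finset.sum_congr rfl (fun a (_ : a ∈ Finset.univ) => by rw [hBC a])]
  have expand : ∑ a, gl i a * ((∑ s, contraGamma g Γ a k s * contraGamma g Γ s l m)
        - ∑ s, contraGamma g Γ a l s * contraGamma g Γ s k m)
      = (∑ s, (∑ a, gl i a * contraGamma g Γ a k s) * contraGamma g Γ s l m)
        - ∑ s, (∑ a, gl i a * contraGamma g Γ a l s) * contraGamma g Γ s k m := by
    rw [← sum_swap_mul (fun a => gl i a) (fun a s => contraGamma g Γ a k s)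
        (fun s => contraGamma g Γ s l m),
      ← sum_swap_mul (fun a => gl i a) (fun a s => contraGamma g Γ a l s)
        (fun s => contraGamma g Γ s k m), ← Finset.sum_sub_distrib]
    exact Finset.sum_congr rfl fun a _ => by rw [mul_sub]
  rw [expand]
  simp only [hcontr]
  rw [← Finset.sum_sub_distrib, ← Finset.sum_neg_distrib]
  exact Finset.sum_congr rfl fun s _ => by ring

end DiffPolyAlg

namespace DiffPolyAlg

variable {n : ℕ} {A : Type*} [CommRing A] [Algebra ℝ A] (D : DiffPolyAlg n A)

lemma Efun_neg_w (i : Fin n) (w f : A) (N : ℕ) :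
    D.Efun i (-w) f N = -D.Efun i w f N := by
  have h := D.Efun_add_w i w (-w) f N
  simp only [add_neg_cancel, D.Efun_zero_w] at h
  exact eq_neg_of_add_eq_zero_right h.symm

end DiffPolyAlg


open DiffPolyAlg in
/-- Let `g^{ij}(u)` be a smooth nondegenerate contravariant
metric of zero curvature with Levi-Civita Christoffel symbols `Γ^i_{jk}`, and
set `Γ^{ij}_k := −g^{is}Γ^j_{sk}`. Then for reduced 1-forms `α, β ∈ 𝒜ⁿ`, the
bracket `{α,β} := Lie_{Pβ}α − Lie_{Pα}β + δ⟨β, Pα⟩` is, as a 1-form on the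
formal loop space, the reduced 1-form with components
`{α,β}_i = Σ ∂_x^s(g^{kl}∂_xβ_l + Γ^{kl}_m u^m_x β_l)(∂α_i/∂u^k_{(s)})`
`− Σ ∂_x^s(g^{kl}∂_xα_l + Γ^{kl}_m u^m_x α_l)(∂β_i/∂u^k_{(s)})`
`+ Σ (α_k ∂_x β_l − β_k ∂_x α_l) Γ^{lk}_i − Σ α_k β_l [Γ^k_{is}Γ^{sl}_m − Γ^l_{is}Γ^{sk}_m] u^m_x`. -/
theorem hydro_bracket_reduced {n : ℕ} (hn : 1 ≤ n) {A : Type*} [CommRing A]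
    [Algebra ℝ A] (D : DiffPolyAlg n A)
    (g gl : Fin n → Fin n → A) (Γ : Fin n → Fin n → Fin n → A)
    -- `g`, its inverse `gl` and `Γ` are functions of `u = u_{(0)}` only
    (hg_fun : ∀ i j (v : Fin n × ℕ), 1 ≤ v.2 → D.pd v (g i j) = 0)
    (hgl_fun : ∀ i j (v : Fin n × ℕ), 1 ≤ v.2 → D.pd v (gl i j) = 0)
    (hΓ_fun : ∀ i j k (v : Fin n × ℕ), 1 ≤ v.2 → D.pd v (Γ i j k) = 0)
    -- `g` is symmetric and nondegenerate, with inverse (covariant) metric `gl`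
    (hg_symm : ∀ i j, g i j = g j i)
    (hg_inv : ∀ i j, ∑ s, g i s * gl s j = if i = j then 1 else 0)
    -- `Γ` is the Levi-Civita connection of `g`: torsion-free and metric
    (hΓ_symm : ∀ i j k, Γ i j k = Γ i k j)
    (hΓ_metric : ∀ k i j, D.pd (k, 0) (gl i j) =
      ∑ l, (gl l j * Γ l i k + gl i l * Γ l j k))
    -- zero curvature, in contravariant form
    (hflat : ∀ i j k l,
      (∑ s, g i s * (D.pd (s, 0) (contraGamma g Γ j k l)
          - D.pd (l, 0) (contraGamma g Γ j k s)))
        - (∑ s, contraGamma g Γ i j s * contraGamma g Γ s k l)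
        + (∑ s, contraGamma g Γ i k s * contraGamma g Γ s j l) = 0)
    (α β : Fin n → A) :
    ∀ i : Fin n,
      reducedRawBracketG D g Γ α β i =
        (∑ v ∈ D.supp (α i), D.Dx^[v.2] (hydroP D g Γ β v.1) * D.pd v (α i))
          - (∑ v ∈ D.supp (β i), D.Dx^[v.2] (hydroP D g Γ α v.1) * D.pd v (β i))
          + (∑ k, ∑ l, (α k * D.Dx (β l) - β k * D.Dx (α l)) * contraGamma g Γ l k i)
          - ∑ k, ∑ l, ∑ m, α k * β l *
              ((∑ s, (Γ k i s * contraGamma g Γ s l m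
                  - Γ l i s * contraGamma g Γ s k m)) * D.u (m, 1)) := by
  intro i
  classical
  have hlg := inv_comm g gl hg_inv
  have hKM : ∀ m k l : Fin n, D.pd (m, 0) (g k l)
      = contraGamma g Γ k l m + contraGamma g Γ l k m :=
    fun m k l => key_metric D g gl Γ hg_symm hg_inv hΓ_metric m k l
  have hKC := key_curv D g gl Γ hlg hflat
  have hΓc_fun : ∀ (a b c : Fin n) (v : Fin n × ℕ), 1 ≤ v.2 →
      D.pd v (contraGamma g Γ a b c) = 0 := by
    intro a b c v hv
    unfold contraGamma
    rw [D.pd_neg, D.pd_sum]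
    simp [D.pd_mul, hg_fun _ _ v hv, hΓ_fun _ _ _ v hv]
  set O := rawBracketOrdersG D g Γ α β i with hO
  set B := max (max (Finset.univ.sup fun k => (D.supp (α k)).sup Prod.snd + 1)
      (Finset.univ.sup fun k => (D.supp (β k)).sup Prod.snd + 1))
    (max (O.sup id + 1) 1) with hB
  have hBα : ∀ k, D.Bdd (α k) i B := by
    intro k
    refine Bdd.mono D (D.bdd_default (α k) i) ?_
    calc (D.supp (α k)).sup Prod.snd + 1
        ≤ Finset.univ.sup (fun k => (D.supp (α k)).sup Prod.snd + 1) :=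
          Finset.le_sup (f := fun k => (D.supp (α k)).sup Prod.snd + 1)
            (Finset.mem_univ k)
      _ ≤ B := le_max_of_le_left (le_max_left _ _)
  have hBβ : ∀ k, D.Bdd (β k) i B := by
    intro k
    refine Bdd.mono D (D.bdd_default (β k) i) ?_
    calc (D.supp (β k)).sup Prod.snd + 1
        ≤ Finset.univ.sup (fun k => (D.supp (β k)).sup Prod.snd + 1) :=
          Finset.le_sup (f := fun k => (D.supp (β k)).sup Prod.snd + 1)
            (Finset.mem_univ k)
      _ ≤ B := le_max_of_le_left (le_max_right _ _)
  have hB1 : 1 ≤ B := le_max_of_le_right (le_max_right _ _)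
  have hON : O ⊆ Finset.range (B + 1) := by
    intro t ht
    rw [Finset.mem_range]
    have : t ≤ O.sup id := Finset.le_sup (f := id) ht
    have h2 : O.sup id + 1 ≤ B := le_max_of_le_right (le_max_left _ _)
    omega
  set N := B + 1 with hN
  -- Step A
  have stepA : reducedRawBracketG D g Γ α β i
      = ∑ t ∈ Finset.range N, ((-1 : ℝ) ^ t) •
          D.Dx^[t] (rawBracketCompG D g Γ α β i t) := by
    unfold reducedRawBracketG
    rw [← hO]
    refine Finset.sum_subset hON ?_
    intro t ht hnt
    have ht0 : t ≠ 0 := fun h => hnt (by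
      rw [hO, h]; exact Finset.mem_insert_self _ _)
    have hβk : ∀ k, t ∉ D.sset (hydroP D g Γ β k) i := fun k hmem => hnt (by
      rw [hO]
      exact Finset.mem_insert_of_mem (Finset.mem_union_left _
        (Finset.mem_biUnion.mpr ⟨k, Finset.mem_univ k,
          Finset.mem_union_left _ hmem⟩)))
    have hαk : ∀ k, t ∉ D.sset (hydroP D g Γ α k) i := fun k hmem => hnt (by
      rw [hO]
      exact Finset.mem_insert_of_mem (Finset.mem_union_left _
        (Finset.mem_biUnion.mpr ⟨k, Finset.mem_univ k,
          Finset.mem_union_right _ hmem⟩)))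
    have hlast : t ∉ D.sset (∑ l, β l * hydroP D g Γ α l) i := fun hmem => hnt (by
      rw [hO]
      exact Finset.mem_insert_of_mem (Finset.mem_union_right _ hmem))
    have hcomp0 : rawBracketCompG D g Γ α β i t = 0 := by
      unfold rawBracketCompG
      rw [if_neg ht0, D.pd_eq_zero_of_not_sset _ _ _ hlast]
      simp [D.pd_eq_zero_of_not_sset _ _ _ (hβk _),
        D.pd_eq_zero_of_not_sset _ _ _ (hαk _)]
    rw [hcomp0, D.DxIter_zero, smul_zero]
  -- Step B
  have stepB : ∑ t ∈ Finset.range N, ((-1 : ℝ) ^ t) •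
          D.Dx^[t] (rawBracketCompG D g Γ α β i t)
      = ((∑ v ∈ D.supp (α i), D.Dx^[v.2] (hydroP D g Γ β v.1) * D.pd v (α i))
          - ∑ v ∈ D.supp (β i), D.Dx^[v.2] (hydroP D g Γ α v.1) * D.pd v (β i))
        + ((∑ k, D.Efun i (α k) (hydroP D g Γ β k) N)
          + ∑ l, D.Efun i (hydroP D g Γ α l) (β l) N) := by
    have hcomp : ∀ t : ℕ, rawBracketCompG D g Γ α β i t
        = (if t = 0 then
            (∑ v ∈ D.supp (α i), D.Dx^[v.2] (hydroP D g Γ β v.1) * D.pd v (α i))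
              - ∑ v ∈ D.supp (β i),
                  D.Dx^[v.2] (hydroP D g Γ α v.1) * D.pd v (β i)
           else 0)
          + ((∑ k, α k * D.pd (i, t) (hydroP D g Γ β k))
            + ∑ l, hydroP D g Γ α l * D.pd (i, t) (β l)) := by
      intro t
      unfold rawBracketCompG
      rw [D.pd_sum]
      rw [Finset.sum_congr rfl
        (fun l (_ : l ∈ Finset.univ) => D.pd_mul (i, t) (β l) (hydroP D g Γ α l))]
      rw [Finset.sum_add_distrib]
      have e0 : ∑ l, D.pd (i, t) (β l) * hydroP D g Γ α l
          = ∑ l, hydroP D g Γ α l * D.pd (i, t) (β l) :=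
        Finset.sum_congr rfl fun l _ => mul_comm _ _
      rw [e0]
      ring
    have e1 : ∀ t ∈ Finset.range N, ((-1 : ℝ) ^ t) •
        D.Dx^[t] (rawBracketCompG D g Γ α β i t)
        = ((-1 : ℝ) ^ t) • D.Dx^[t] (if t = 0 then
            (∑ v ∈ D.supp (α i), D.Dx^[v.2] (hydroP D g Γ β v.1) * D.pd v (α i))
              - ∑ v ∈ D.supp (β i),
                  D.Dx^[v.2] (hydroP D g Γ α v.1) * D.pd v (β i)
           else 0)
          + (((-1 : ℝ) ^ t) •
              D.Dx^[t] (∑ k, α k * D.pd (i, t) (hydroP D g Γ β k))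
            + ((-1 : ℝ) ^ t) •
              D.Dx^[t] (∑ l, hydroP D g Γ α l * D.pd (i, t) (β l))) := by
      intro t _
      rw [hcomp t, D.DxIter_add, D.DxIter_add, smul_add, smul_add]
    rw [Finset.sum_congr rfl e1, Finset.sum_add_distrib, Finset.sum_add_distrib]
    have e2 : ∑ t ∈ Finset.range N, ((-1 : ℝ) ^ t) • D.Dx^[t] (if t = 0 then
            (∑ v ∈ D.supp (α i), D.Dx^[v.2] (hydroP D g Γ β v.1) * D.pd v (α i))
              - ∑ v ∈ D.supp (β i),
                  D.Dx^[v.2] (hydroP D g Γ α v.1) * D.pd v (β i)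
           else 0)
        = (∑ v ∈ D.supp (α i), D.Dx^[v.2] (hydroP D g Γ β v.1) * D.pd v (α i))
              - ∑ v ∈ D.supp (β i),
                  D.Dx^[v.2] (hydroP D g Γ α v.1) * D.pd v (β i) := by
      rw [Finset.sum_eq_single 0]
      · simp
      · intro t _ ht
        rw [if_neg ht, D.DxIter_zero, smul_zero]
      · intro h
        exact absurd (Finset.mem_range.mpr (by omega)) h
    have e3 : ∑ t ∈ Finset.range N, ((-1 : ℝ) ^ t) •
          D.Dx^[t] (∑ k, α k * D.pd (i, t) (hydroP D g Γ β k))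
        = ∑ k, D.Efun i (α k) (hydroP D g Γ β k) N := by
      calc ∑ t ∈ Finset.range N, ((-1 : ℝ) ^ t) •
            D.Dx^[t] (∑ k, α k * D.pd (i, t) (hydroP D g Γ β k))
          = ∑ t ∈ Finset.range N, ∑ k, ((-1 : ℝ) ^ t) •
              D.Dx^[t] (α k * D.pd (i, t) (hydroP D g Γ β k)) := by
            exact Finset.sum_congr rfl fun t _ => by
              rw [D.DxIter_sum, Finset.smul_sum]
        _ = ∑ k, ∑ t ∈ Finset.range N, ((-1 : ℝ) ^ t) •
              D.Dx^[t] (α k * D.pd (i, t) (hydroP D g Γ β k)) := Finset.sum_comm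
        _ = ∑ k, D.Efun i (α k) (hydroP D g Γ β k) N := rfl
    have e4 : ∑ t ∈ Finset.range N, ((-1 : ℝ) ^ t) •
          D.Dx^[t] (∑ l, hydroP D g Γ α l * D.pd (i, t) (β l))
        = ∑ l, D.Efun i (hydroP D g Γ α l) (β l) N := by
      calc ∑ t ∈ Finset.range N, ((-1 : ℝ) ^ t) •
            D.Dx^[t] (∑ l, hydroP D g Γ α l * D.pd (i, t) (β l))
          = ∑ t ∈ Finset.range N, ∑ l, ((-1 : ℝ) ^ t) •
              D.Dx^[t] (hydroP D g Γ α l * D.pd (i, t) (β l)) := by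
            exact Finset.sum_congr rfl fun t _ => by
              rw [D.DxIter_sum, Finset.smul_sum]
        _ = ∑ l, ∑ t ∈ Finset.range N, ((-1 : ℝ) ^ t) •
              D.Dx^[t] (hydroP D g Γ α l * D.pd (i, t) (β l)) := Finset.sum_comm
        _ = ∑ l, D.Efun i (hydroP D g Γ α l) (β l) N := rfl
    rw [e2, e3, e4]
  -- Step C
  have stepC : (∑ k, D.Efun i (α k) (hydroP D g Γ β k) N)
          + (∑ l, D.Efun i (hydroP D g Γ α l) (β l) N)
      = (∑ k, ∑ l, (α k * D.Dx (β l) - β k * D.Dx (α l)) * contraGamma g Γ l k i)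
        - ∑ k, ∑ l, ∑ m, α k * β l *
            ((∑ s, (Γ k i s * contraGamma g Γ s l m
                - Γ l i s * contraGamma g Γ s k m)) * D.u (m, 1)) := by
    rw [hN]
    have hN1 : 1 ≤ B + 1 := by omega
    have hN2 : 2 ≤ B + 1 := by omega
    -- expansion of the β side
    have expβ : ∀ k, D.Efun i (α k) (hydroP D g Γ β k) (B + 1)
        = (∑ l, (α k * D.Dx (β l) * D.pd (i, 0) (g k l)
            + -D.Efun i (D.Dx (α k * g k l)) (β l) (B + 1)))
          + ∑ l, ∑ m,
            (α k * (D.u (m, 1) * β l) * D.pd (i, 0) (contraGamma g Γ k l m)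
              + ((if m = i then -D.Dx (α k * contraGamma g Γ k l m * β l) else 0)
                + D.Efun i (α k * contraGamma g Γ k l m * D.u (m, 1)) (β l)
                    (B + 1))) := by
      intro k
      have hdef : hydroP D g Γ β k
          = (∑ l, g k l * D.Dx (β l))
            + ∑ l, ∑ m, contraGamma g Γ k l m * (D.u (m, 1) * β l) := rfl
      rw [hdef, D.Efun_add_f, D.Efun_sum_f, D.Efun_sum_f]
      refine congrArg₂ (· + ·) (Finset.sum_congr rfl fun l _ => ?_)
        (Finset.sum_congr rfl fun l _ => ?_)
      · rw [D.Efun_mul, D.Efun_order0 i (α k * D.Dx (β l)) (g k l) (B + 1)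
            (hg_fun k l) hN1,
          Efun_adjoint D (hBβ l) (α k * g k l)]
      · rw [D.Efun_sum_f]
        refine Finset.sum_congr rfl fun m _ => ?_
        rw [D.Efun_mul, D.Efun_order0 i (α k * (D.u (m, 1) * β l))
            (contraGamma g Γ k l m) (B + 1) (hΓc_fun k l m) hN1,
          D.Efun_mul, D.Efun_u1 i m (α k * contraGamma g Γ k l m * β l)
            (B + 1) hN2]
    -- expansion of the α side
    have expα : ∀ l, D.Efun i (hydroP D g Γ α l) (β l) (B + 1)
        = (∑ k, D.Efun i (g l k * D.Dx (α k)) (β l) (B + 1))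
          + ∑ k, ∑ m, D.Efun i (contraGamma g Γ l k m * (D.u (m, 1) * α k))
              (β l) (B + 1) := by
      intro l
      have hdef : hydroP D g Γ α l
          = (∑ k, g l k * D.Dx (α k))
            + ∑ k, ∑ m, contraGamma g Γ l k m * (D.u (m, 1) * α k) := rfl
      rw [hdef, D.Efun_add_w, D.Efun_sum_w]
      refine congrArg₂ (· + ·) rfl ?_
      rw [D.Efun_sum_w]
      exact Finset.sum_congr rfl fun k _ => D.Efun_sum_w i Finset.univ _ _ _
    -- the cancellation of all remaining Efun terms
    have hW : ∀ k l : Fin n, (-(D.Dx (α k * g k l)))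
        + ((∑ m, α k * contraGamma g Γ k l m * D.u (m, 1))
          + (g l k * D.Dx (α k)
            + ∑ m, contraGamma g Γ l k m * (D.u (m, 1) * α k))) = 0 := by
      intro k l
      rw [D.Dx_mul, D.Dx_order0 (g k l) (hg_fun k l), hg_symm l k,
        Finset.mul_sum]
      have h1 : ∀ m : Fin n, α k * (D.u (m, 1) * D.pd (m, 0) (g k l))
          = α k * contraGamma g Γ k l m * D.u (m, 1)
            + contraGamma g Γ l k m * (D.u (m, 1) * α k) := by
        intro m; rw [hKM m k l]; ring
      rw [Finset.sum_congr rfl fun m (_ : m ∈ Finset.univ) => h1 m,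
        Finset.sum_add_distrib]
      ring
    have cancel : ∀ k l : Fin n,
        -D.Efun i (D.Dx (α k * g k l)) (β l) (B + 1)
          + ((∑ m, D.Efun i (α k * contraGamma g Γ k l m * D.u (m, 1)) (β l)
              (B + 1))
            + (D.Efun i (g l k * D.Dx (α k)) (β l) (B + 1)
              + ∑ m, D.Efun i (contraGamma g Γ l k m * (D.u (m, 1) * α k))
                  (β l) (B + 1))) = 0 := by
      intro k l
      rw [← D.Efun_neg_w, ← D.Efun_sum_w, ← D.Efun_sum_w, ← D.Efun_add_w,
        ← D.Efun_add_w, ← D.Efun_add_w, hW k l, D.Efun_zero_w]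
    -- the explicit local terms
    have hDx3 : ∀ k l : Fin n, D.Dx (α k * contraGamma g Γ k l i * β l)
        = D.Dx (α k) * contraGamma g Γ k l i * β l
          + α k * contraGamma g Γ k l i * D.Dx (β l)
          + ∑ m, α k * (D.u (m, 1) * D.pd (m, 0) (contraGamma g Γ k l i))
              * β l := by
      intro k l
      rw [D.Dx_mul, D.Dx_mul, D.Dx_order0 (contraGamma g Γ k l i)
        (hΓc_fun k l i), Finset.mul_sum, add_mul, Finset.sum_mul]
      ring
    have perkl2 : ∀ k l : Fin n,
        α k * D.Dx (β l) * D.pd (i, 0) (g k l)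
          + (∑ m, α k * (D.u (m, 1) * β l)
              * D.pd (i, 0) (contraGamma g Γ k l m))
          + -D.Dx (α k * contraGamma g Γ k l i * β l)
        = α k * D.Dx (β l) * contraGamma g Γ l k i
          - β l * D.Dx (α k) * contraGamma g Γ k l i
          - ∑ m, α k * β l * ((∑ s, (Γ k i s * contraGamma g Γ s l m
              - Γ l i s * contraGamma g Γ s k m)) * D.u (m, 1)) := by
      intro k l
      rw [hKM i k l, hDx3 k l]
      have hm : ∀ m : Fin n,
          α k * (D.u (m, 1) * β l) * D.pd (i, 0) (contraGamma g Γ k l m)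
            - α k * (D.u (m, 1) * D.pd (m, 0) (contraGamma g Γ k l i)) * β l
          = -(α k * β l * ((∑ s, (Γ k i s * contraGamma g Γ s l m
              - Γ l i s * contraGamma g Γ s k m)) * D.u (m, 1))) := by
        intro m
        have h := hKC i k l m
        linear_combination (α k * β l * D.u (m, 1)) * h
      have hsum : (∑ m, α k * (D.u (m, 1) * β l)
              * D.pd (i, 0) (contraGamma g Γ k l m))
            - ∑ m, α k * (D.u (m, 1) * D.pd (m, 0) (contraGamma g Γ k l i))
                * β l
          = -∑ m, α k * β l * ((∑ s, (Γ k i s * contraGamma g Γ s l m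
              - Γ l i s * contraGamma g Γ s k m)) * D.u (m, 1)) := by
        rw [← Finset.sum_sub_distrib, ← Finset.sum_neg_distrib]
        exact Finset.sum_congr rfl fun m _ => hm m
      linear_combination hsum
    have hB2 : ∀ k l : Fin n, (∑ m, if m = i
          then -D.Dx (α k * contraGamma g Γ k l m * β l) else 0)
        = -D.Dx (α k * contraGamma g Γ k l i * β l) := by
      intro k l
      rw [Finset.sum_ite_eq' Finset.univ i
        (fun m => -D.Dx (α k * contraGamma g Γ k l m * β l)),
        if_pos (Finset.mem_univ i)]
    calc (∑ k, D.Efun i (α k) (hydroP D g Γ β k) (B + 1))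
          + ∑ l, D.Efun i (hydroP D g Γ α l) (β l) (B + 1)
        = (∑ k, ((∑ l, (α k * D.Dx (β l) * D.pd (i, 0) (g k l)
              + -D.Efun i (D.Dx (α k * g k l)) (β l) (B + 1)))
            + ∑ l, ∑ m,
              (α k * (D.u (m, 1) * β l) * D.pd (i, 0) (contraGamma g Γ k l m)
                + ((if m = i then -D.Dx (α k * contraGamma g Γ k l m * β l)
                    else 0)
                  + D.Efun i (α k * contraGamma g Γ k l m * D.u (m, 1)) (β l)
                      (B + 1)))))
          + ∑ l, ((∑ k, D.Efun i (g l k * D.Dx (α k)) (β l) (B + 1))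
            + ∑ k, ∑ m, D.Efun i (contraGamma g Γ l k m * (D.u (m, 1) * α k))
                (β l) (B + 1)) := by
          rw [Finset.sum_congr rfl fun k (_ : k ∈ Finset.univ) => expβ k,
            Finset.sum_congr rfl fun l (_ : l ∈ Finset.univ) => expα l]
      _ = ∑ k, ∑ l,
            ((α k * D.Dx (β l) * D.pd (i, 0) (g k l)
              + (∑ m, α k * (D.u (m, 1) * β l)
                  * D.pd (i, 0) (contraGamma g Γ k l m))
              + (∑ m, if m = i then -D.Dx (α k * contraGamma g Γ k l m * β l)
                  else 0))
            + (-D.Efun i (D.Dx (α k * g k l)) (β l) (B + 1)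
              + ((∑ m, D.Efun i (α k * contraGamma g Γ k l m * D.u (m, 1))
                  (β l) (B + 1))
                + (D.Efun i (g l k * D.Dx (α k)) (β l) (B + 1)
                  + ∑ m, D.Efun i (contraGamma g Γ l k m * (D.u (m, 1) * α k))
                      (β l) (B + 1))))) := by
          have sc1 : (∑ l, ∑ k, D.Efun i (g l k * D.Dx (α k)) (β l) (B + 1))
              = ∑ k, ∑ l, D.Efun i (g l k * D.Dx (α k)) (β l) (B + 1) :=
            Finset.sum_comm
          have sc2 : (∑ l, ∑ k, ∑ m, D.Efun i
                (contraGamma g Γ l k m * (D.u (m, 1) * α k)) (β l) (B + 1))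
              = ∑ k, ∑ l, ∑ m, D.Efun i
                (contraGamma g Γ l k m * (D.u (m, 1) * α k)) (β l) (B + 1) :=
            Finset.sum_comm
          simp only [Finset.sum_add_distrib, sc1, sc2]
          ring
      _ = ∑ k, ∑ l,
            (α k * D.Dx (β l) * D.pd (i, 0) (g k l)
              + (∑ m, α k * (D.u (m, 1) * β l)
                  * D.pd (i, 0) (contraGamma g Γ k l m))
              + -D.Dx (α k * contraGamma g Γ k l i * β l)) := by
          refine Finset.sum_congr rfl fun k _ => Finset.sum_congr rfl
            fun l _ => ?_
          rw [hB2 k l]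
          linear_combination cancel k l
      _ = ∑ k, ∑ l,
            (α k * D.Dx (β l) * contraGamma g Γ l k i
              - β l * D.Dx (α k) * contraGamma g Γ k l i
              - ∑ m, α k * β l * ((∑ s, (Γ k i s * contraGamma g Γ s l m
                  - Γ l i s * contraGamma g Γ s k m)) * D.u (m, 1))) :=
          Finset.sum_congr rfl fun k _ => Finset.sum_congr rfl
            fun l _ => perkl2 k l
      _ = (∑ k, ∑ l, (α k * D.Dx (β l) - β k * D.Dx (α l))
              * contraGamma g Γ l k i)
          - ∑ k, ∑ l, ∑ m, α k * β l *
              ((∑ s, (Γ k i s * contraGamma g Γ s l m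
                  - Γ l i s * contraGamma g Γ s k m)) * D.u (m, 1)) := by
          have h2 : (∑ k, ∑ l, β k * D.Dx (α l) * contraGamma g Γ l k i)
              = ∑ k, ∑ l, β l * D.Dx (α k) * contraGamma g Γ k l i :=
            Finset.sum_comm
          simp only [sub_mul, Finset.sum_sub_distrib, h2]
  rw [stepA, stepB, stepC]
  ring
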